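/- Let p be a prime and let e₁, e₂, e₃, e₄ be positive integers with eᵢ < p for all i, Σᵢ(eᵢ−1) = 2d−2 for an integer d, and eᵢ ≤ d for all i. Then the tuple (e₁,e₂,e₃,e₄) is numerically p-admissible if and only if eᵢ > d + 1 − p for all i. -/
import Mathlib


/-- The triangle inequality for a triple of naturals. -/
def Triangle (a b c : ℕ) : Prop := a ≤ b + c ∧ b ≤ a + c ∧ c ≤ a + b

/-- A tuple `(e 1, …, e r)` of positive integers each `< p` is numerically `p`-admissible
if there are positive integers `e' 2, …, e' (r-2)` prime to `p` such that, with the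
conventions `e' 1 = e 1` and `e' (r-1) = e r`, each consecutive triple
`(e' m, e (m+1), e' (m+1))` satisfies the triangle inequality and has odd sum less
than `2p`. -/
def NumericallyPAdmissible (p r : ℕ) (e : ℕ → ℕ) : Prop :=
  ∃ e' : ℕ → ℕ,
    e' 1 = e 1 ∧ e' (r - 1) = e r ∧
    (∀ m, 2 ≤ m → m ≤ r - 2 → 0 < e' m ∧ ¬ p ∣ e' m) ∧
    (∀ m, 1 ≤ m → m < r - 1 →
      Triangle (e' m) (e (m + 1)) (e' (m + 1)) ∧
      Odd (e' m + e (m + 1) + e' (m + 1)) ∧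
      e' m + e (m + 1) + e' (m + 1) < 2 * p)

/-- Example 4.5 (four points): for `r = 4` and all `eᵢ < p`, the tuple `(e₁, e₂, e₃, e₄)`
is numerically `p`-admissible if and only if `eᵢ > d + 1 − p` for all `i`. -/
theorem four_point_admissibility (p : ℕ) (hp : p.Prime) (d : ℕ) (e : ℕ → ℕ)
    (he : ∀ i, 1 ≤ i → i ≤ 4 → 0 < e i)
    (hep : ∀ i, 1 ≤ i → i ≤ 4 → e i < p)
    (hed : ∀ i, 1 ≤ i → i ≤ 4 → e i ≤ d)
    (hsum : 2 * d + 2 = e 1 + e 2 + e 3 + e 4) :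
    NumericallyPAdmissible p 4 e ↔
      ∀ i, 1 ≤ i → i ≤ 4 → (d : ℤ) + 1 - p < (e i : ℤ) := by
  have h1 := he 1 (by norm_num) (by norm_num)
  have h2 := he 2 (by norm_num) (by norm_num)
  have h3 := he 3 (by norm_num) (by norm_num)
  have h4 := he 4 (by norm_num) (by norm_num)
  have hp1 := hep 1 (by norm_num) (by norm_num)
  have hp2 := hep 2 (by norm_num) (by norm_num)
  have hp3 := hep 3 (by norm_num) (by norm_num)
  have hp4 := hep 4 (by norm_num) (by norm_num)
  have hd1 := hed 1 (by norm_num) (by norm_num)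
  have hd2 := hed 2 (by norm_num) (by norm_num)
  have hd3 := hed 3 (by norm_num) (by norm_num)
  have hd4 := hed 4 (by norm_num) (by norm_num)
  constructor
  · rintro ⟨e', he1, he3, _, htri⟩
    have t1 := htri 1 (by norm_num) (by norm_num)
    have t2 := htri 2 (by norm_num) (by norm_num)
    simp only [Triangle, show (1:ℕ)+1 = 2 from rfl, show (2:ℕ)+1 = 3 from rfl] at t1 t2
    rw [he1] at t1
    rw [show (4 : ℕ) - 1 = 3 from rfl] at he3
    rw [he3] at t2
    obtain ⟨⟨a1, a2, a3⟩, _, s1⟩ := t1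
    obtain ⟨⟨b1, b2, b3⟩, _, s2⟩ := t2
    intro i hi1 hi4
    interval_cases i <;> omega
  · intro hbig
    have g1 := hbig 1 (by norm_num) (by norm_num)
    have g2 := hbig 2 (by norm_num) (by norm_num)
    have g3 := hbig 3 (by norm_num) (by norm_num)
    have g4 := hbig 4 (by norm_num) (by norm_num)
    set K : ℕ := max (e 1 - e 2 + (e 2 - e 1)) (e 3 - e 4 + (e 4 - e 3)) + 1 with hK
    refine ⟨fun m => if m = 1 then e 1 else if m = 2 then K else e 4, rfl, rfl, ?_, ?_⟩
    · intro m hm2 hm2'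
      have : m = 2 := by omega
      subst this
      show 0 < K ∧ ¬ p ∣ K
      refine ⟨by omega, Nat.not_dvd_of_pos_of_lt (by omega) (by omega)⟩
    · intro m hm1 hm3
      have hm : m = 1 ∨ m = 2 := by omega
      rcases hm with rfl | rfl
      · show Triangle (e 1) (e 2) K ∧ Odd (e 1 + e 2 + K) ∧ e 1 + e 2 + K < 2 * p
        simp only [Triangle, Nat.odd_iff]
        refine ⟨⟨?_, ?_, ?_⟩, ?_, ?_⟩ <;> omega
      · show Triangle K (e 3) (e 4) ∧ Odd (K + e 3 + e 4) ∧ K + e 3 + e 4 < 2 * p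
        simp only [Triangle, Nat.odd_iff]
        refine ⟨⟨?_, ?_, ?_⟩, ?_, ?_⟩ <;> omega
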